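/- Let m > 0 and q ∈ ℝ with 0 < q² ≤ m², and let r_* > r₊. Then Q(r_*) = r_*·(2r_*² − 5m·r_* + 3q²)/(2·D_*); consequently Q(r_*) ≥ 0 if r_* ∈ [r_⊛, ∞) and Q(r_*) < 0 if r_* ∈ (r₊, r_⊛). -/

import Mathlib

/-- The metric function `D(r) = 1 - 2m/r + q²/r²` of the Reissner–Nordström spacetime. -/
noncomputable def D (m q r : ℝ) : ℝ := 1 - 2*m/r + q^2/r^2

/-- The radius `r₊ = m + √(m² - q²)` of the event horizon. -/
noncomputable def rplus (m q : ℝ) : ℝ := m + Real.sqrt (m^2 - q^2)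

/-- The critical radius `r_⊛ = (5m + √(25m² - 24q²))/4`. -/
noncomputable def rcirc (m q : ℝ) : ℝ := (5*m + Real.sqrt (25*m^2 - 24*q^2))/4

/-- The constant `β = 2√(D(r_*))/r_*` associated to the conformal curve starting at `r_*`. -/
noncomputable def betaConst (m q rs : ℝ) : ℝ := 2 * Real.sqrt (D m q rs) / rs

/-- The coefficient `η = (D_* - 1)/β²` of the cubic `Q`. -/
noncomputable def etaCoeff (m q rs : ℝ) : ℝ := (D m q rs - 1) / (betaConst m q rs)^2

/-- The coefficient `ξ = q²/(r_*·β²)` of the cubic `Q`. -/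
noncomputable def xiCoeff (m q rs : ℝ) : ℝ := q^2 / (rs * (betaConst m q rs)^2)

/-- The cubic `Q(x) = x³ + ηx + ξ`. -/
noncomputable def Qcubic (m q rs x : ℝ) : ℝ := x^3 + etaCoeff m q rs * x + xiCoeff m q rs

/-- For `m > 0`, `0 < q² ≤ m²` and `r_* > r₊` one has
`Q(r_*) = r_*(2r_*² - 5m·r_* + 3q²)/(2D_*)`; consequently `Q(r_*) ≥ 0` if `r_* ≥ r_⊛`
and `Q(r_*) < 0` if `r_* ∈ (r₊, r_⊛)`. -/
theorem Q_at_initial_radius (m q rs : ℝ) (hm : 0 < m) (hq0 : 0 < q^2) (hq : q^2 ≤ m^2)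
    (hrs : rplus m q < rs) :
    Qcubic m q rs rs = rs * (2*rs^2 - 5*m*rs + 3*q^2) / (2 * D m q rs)
    ∧ (rcirc m q ≤ rs → 0 ≤ Qcubic m q rs rs)
    ∧ (rs < rcirc m q → Qcubic m q rs rs < 0) := by
  have hs0 : 0 ≤ Real.sqrt (m^2 - q^2) := Real.sqrt_nonneg _
  have hs2 : (Real.sqrt (m^2 - q^2))^2 = m^2 - q^2 := Real.sq_sqrt (by nlinarith)
  set s := Real.sqrt (m^2 - q^2) with hsdef
  rw [rplus] at hrs
  have hrs0 : 0 < rs := by nlinarith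
  have hP : 0 < rs^2 - 2*m*rs + q^2 := by nlinarith
  have hDval : D m q rs = (rs^2 - 2*m*rs + q^2) / rs^2 := by
    unfold D; field_simp
  have hD : 0 < D m q rs := by
    rw [hDval]; exact div_pos hP (by positivity)
  have hβ : (betaConst m q rs)^2 = 4 * D m q rs / rs^2 := by
    unfold betaConst
    rw [div_pow, mul_pow, Real.sq_sqrt hD.le]; ring
  have heq : Qcubic m q rs rs = rs * (2*rs^2 - 5*m*rs + 3*q^2) / (2 * D m q rs) := by
    unfold Qcubic etaCoeff xiCoeff
    rw [hβ, hDval]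
    field_simp [hP.ne', hrs0.ne', show rs * (rs - 2 * m) + q ^ 2 ≠ 0 by nlinarith]
    ring
  refine ⟨heq, ?_, ?_⟩
  · -- r_⊛ case
    intro h
    have hsc0 : 0 ≤ Real.sqrt (25*m^2 - 24*q^2) := Real.sqrt_nonneg _
    have hsc2 : (Real.sqrt (25*m^2 - 24*q^2))^2 = 25*m^2 - 24*q^2 :=
      Real.sq_sqrt (by nlinarith)
    set c := Real.sqrt (25*m^2 - 24*q^2) with hcdef
    rw [rcirc] at h
    have hcm : m ≤ c := by nlinarith
    have hquad : 0 ≤ 2*rs^2 - 5*m*rs + 3*q^2 := by nlinarith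
    rw [heq]
    positivity
  · intro h
    have hsc0 : 0 ≤ Real.sqrt (25*m^2 - 24*q^2) := Real.sqrt_nonneg _
    have hsc2 : (Real.sqrt (25*m^2 - 24*q^2))^2 = 25*m^2 - 24*q^2 :=
      Real.sq_sqrt (by nlinarith)
    set c := Real.sqrt (25*m^2 - 24*q^2) with hcdef
    rw [rcirc] at h
    have hcm : m ≤ c := by nlinarith
    have hquad : 2*rs^2 - 5*m*rs + 3*q^2 < 0 := by nlinarith
    rw [heq]
    apply div_neg_of_neg_of_pos
    · nlinarith
    · linarith
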